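/- Define q(x,t) = 2e^{3x+9t} / (1 + 6e^{x+5t} + 3e^{2x+8t}) and r(x,t) = e^{−2x−4t}(1 + 2e^{x+3t} + 3e^{2x+8t}) / (1 + 4e^{x+5t} + e^{2x+8t}). Then r satisfies the PDE ∂_t r = −∂_x² r + 2 q r (∂_x r) for all real x, t. -/

import Mathlib

open Real

noncomputable def q (x t : ℝ) : ℝ :=
  2 * exp (3 * x + 9 * t) / (1 + 6 * exp (x + 5 * t) + 3 * exp (2 * x + 8 * t))

noncomputable def r (x t : ℝ) : ℝ :=
  exp (-2 * x - 4 * t) * (1 + 2 * exp (x + 3 * t) + 3 * exp (2 * x + 8 * t))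
    / (1 + 4 * exp (x + 5 * t) + exp (2 * x + 8 * t))

noncomputable def rx (x t : ℝ) : ℝ :=
  (-2 * exp (-2*x-4*t) * (1 + exp (x+3*t)) * (1 + 4*exp (x+5*t) + exp (2*x+8*t))
    - exp (-2*x-4*t) * (1 + 2*exp (x+3*t) + 3*exp (2*x+8*t)) * (4*exp (x+5*t) + 2*exp (2*x+8*t)))
  / (1 + 4*exp (x+5*t) + exp (2*x+8*t))^2

noncomputable def rxx (x t : ℝ) : ℝ :=
  (exp (-2*x-4*t) * ((4 + 2*exp (x+3*t)) * (1 + 4*exp (x+5*t) + exp (2*x+8*t))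
      - (1 + 2*exp (x+3*t) + 3*exp (2*x+8*t)) * (4*exp (x+5*t) + 4*exp (2*x+8*t)))
      * (1 + 4*exp (x+5*t) + exp (2*x+8*t))
    - 2 * (-2 * exp (-2*x-4*t) * (1 + exp (x+3*t)) * (1 + 4*exp (x+5*t) + exp (2*x+8*t))
      - exp (-2*x-4*t) * (1 + 2*exp (x+3*t) + 3*exp (2*x+8*t)) * (4*exp (x+5*t) + 2*exp (2*x+8*t)))
      * (4*exp (x+5*t) + 2*exp (2*x+8*t)))
  / (1 + 4*exp (x+5*t) + exp (2*x+8*t))^3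

noncomputable def rt (x t : ℝ) : ℝ :=
  (exp (-2*x-4*t) * (-4 - 2*exp (x+3*t) + 12*exp (2*x+8*t)) * (1 + 4*exp (x+5*t) + exp (2*x+8*t))
    - exp (-2*x-4*t) * (1 + 2*exp (x+3*t) + 3*exp (2*x+8*t)) * (20*exp (x+5*t) + 8*exp (2*x+8*t)))
  / (1 + 4*exp (x+5*t) + exp (2*x+8*t))^2

lemma expLin (a b x t : ℝ) :
    HasDerivAt (fun y : ℝ => exp (a * y + b * t)) (a * exp (a * x + b * t)) x := by
  have h : HasDerivAt (fun y : ℝ => a * y + b * t) a x := by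
    simpa using ((hasDerivAt_id x).const_mul a).add_const (b * t)
  simpa [mul_comm] using h.exp

lemma expLinT (a b x t : ℝ) :
    HasDerivAt (fun s : ℝ => exp (a * x + b * s)) (b * exp (a * x + b * t)) t := by
  have h : HasDerivAt (fun s : ℝ => a * x + b * s) b t := by
    simpa using ((hasDerivAt_id t).const_mul b).const_add (a * x)
  simpa [mul_comm] using h.exp

lemma hA (x t : ℝ) : HasDerivAt (fun y : ℝ => exp (y + 3*t)) (exp (x+3*t)) x := by
  simpa using expLin 1 3 x t

lemma hB (x t : ℝ) : HasDerivAt (fun y : ℝ => exp (y + 5*t)) (exp (x+5*t)) x := by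
  simpa using expLin 1 5 x t

lemma hC (x t : ℝ) : HasDerivAt (fun y : ℝ => exp (2*y + 8*t)) (2 * exp (2*x+8*t)) x :=
  expLin 2 8 x t

lemma hE (x t : ℝ) : HasDerivAt (fun y : ℝ => exp (-2*y - 4*t)) (-2 * exp (-2*x-4*t)) x := by
  simpa [sub_eq_add_neg] using
    expLin (-2) (-4) x t

lemma hAt (x t : ℝ) : HasDerivAt (fun s : ℝ => exp (x + 3*s)) (3 * exp (x+3*t)) t := by
  simpa using expLinT 1 3 x t

lemma hBt (x t : ℝ) : HasDerivAt (fun s : ℝ => exp (x + 5*s)) (5 * exp (x+5*t)) t := by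
  simpa using expLinT 1 5 x t

lemma hCt (x t : ℝ) : HasDerivAt (fun s : ℝ => exp (2*x + 8*s)) (8 * exp (2*x+8*t)) t :=
  expLinT 2 8 x t

lemma hEt (x t : ℝ) : HasDerivAt (fun s : ℝ => exp (-2*x - 4*s)) (-4 * exp (-2*x-4*t)) t := by
  simpa [sub_eq_add_neg] using
    expLinT (-2) (-4) x t

lemma Dpos (x t : ℝ) : (0:ℝ) < 1 + 4*exp (x+5*t) + exp (2*x+8*t) := by positivity

lemma r_hasDerivAt_x (x t : ℝ) : HasDerivAt (fun y => r y t) (rx x t) x := by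
  have hDne : (1 + 4*exp (x+5*t) + exp (2*x+8*t)) ≠ 0 := (Dpos x t).ne'
  have hN : HasDerivAt
      (fun y : ℝ => exp (-2*y-4*t) * (1 + 2*exp (y+3*t) + 3*exp (2*y+8*t)))
      ((-2 * exp (-2*x-4*t)) * (1 + 2*exp (x+3*t) + 3*exp (2*x+8*t))
        + exp (-2*x-4*t) * (2 * exp (x+3*t) + 3 * (2 * exp (2*x+8*t)))) x :=
    (hE x t).mul ((((hA x t).const_mul 2).const_add 1).add ((hC x t).const_mul 3))
  have hD : HasDerivAt
      (fun y : ℝ => 1 + 4*exp (y+5*t) + exp (2*y+8*t))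
      (4 * exp (x+5*t) + 2 * exp (2*x+8*t)) x :=
    (((hB x t).const_mul 4).const_add 1).add (hC x t)
  have h := hN.fun_div hD hDne
  have hfun : (fun y => r y t) =
      (fun y : ℝ => exp (-2*y-4*t) * (1 + 2*exp (y+3*t) + 3*exp (2*y+8*t))
        / (1 + 4*exp (y+5*t) + exp (2*y+8*t))) := by
    funext y; simp [r]
  rw [hfun]
  refine h.congr_deriv ?_
  rw [rx]
  field_simp
  ring

lemma rx_hasDerivAt (x t : ℝ) : HasDerivAt (fun y => rx y t) (rxx x t) x := by
  have hDne : (1 + 4*exp (x+5*t) + exp (2*x+8*t)) ≠ 0 := (Dpos x t).ne'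
  have hD : HasDerivAt
      (fun y : ℝ => 1 + 4*exp (y+5*t) + exp (2*y+8*t))
      (4 * exp (x+5*t) + 2 * exp (2*x+8*t)) x :=
    (((hB x t).const_mul 4).const_add 1).add (hC x t)
  have hP : HasDerivAt
      (fun y : ℝ => -2 * exp (-2*y-4*t) * (1 + exp (y+3*t)) * (1 + 4*exp (y+5*t) + exp (2*y+8*t))
        - exp (-2*y-4*t) * (1 + 2*exp (y+3*t) + 3*exp (2*y+8*t)) * (4*exp (y+5*t) + 2*exp (2*y+8*t)))
      (((-2 * (-2 * exp (-2*x-4*t))) * (1 + exp (x+3*t))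
          + (-2 * exp (-2*x-4*t)) * exp (x+3*t)) * (1 + 4*exp (x+5*t) + exp (2*x+8*t))
        + (-2 * exp (-2*x-4*t) * (1 + exp (x+3*t))) * (4 * exp (x+5*t) + 2 * exp (2*x+8*t))
        - ((((-2 * exp (-2*x-4*t)) * (1 + 2*exp (x+3*t) + 3*exp (2*x+8*t))
            + exp (-2*x-4*t) * (2 * exp (x+3*t) + 3 * (2 * exp (2*x+8*t))))
              * (4*exp (x+5*t) + 2*exp (2*x+8*t)))
          + exp (-2*x-4*t) * (1 + 2*exp (x+3*t) + 3*exp (2*x+8*t))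
              * (4 * exp (x+5*t) + 2 * (2 * exp (2*x+8*t))))) x := by
    exact ((((((hE x t).const_mul (-2)).mul ((hA x t).const_add 1)).mul hD)).sub
      ((((hE x t).mul ((((hA x t).const_mul 2).const_add 1).add ((hC x t).const_mul 3))).mul
        (((hB x t).const_mul 4).add ((hC x t).const_mul 2)))))
  have hD2 : HasDerivAt
      (fun y : ℝ => (1 + 4*exp (y+5*t) + exp (2*y+8*t))^2)
      (2 * (1 + 4*exp (x+5*t) + exp (2*x+8*t))^1 * (4 * exp (x+5*t) + 2 * exp (2*x+8*t))) x := by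
    simpa using hD.fun_pow 2
  have hD2ne : ((1 + 4*exp (x+5*t) + exp (2*x+8*t))^2) ≠ 0 := pow_ne_zero _ hDne
  have h := hP.fun_div hD2 hD2ne
  have hfun : (fun y => rx y t) =
      (fun y : ℝ => (-2 * exp (-2*y-4*t) * (1 + exp (y+3*t)) * (1 + 4*exp (y+5*t) + exp (2*y+8*t))
        - exp (-2*y-4*t) * (1 + 2*exp (y+3*t) + 3*exp (2*y+8*t)) * (4*exp (y+5*t) + 2*exp (2*y+8*t)))
        / (1 + 4*exp (y+5*t) + exp (2*y+8*t))^2) := by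
    funext y; simp [rx]
  rw [hfun]
  refine h.congr_deriv ?_
  rw [rxx]
  field_simp
  ring

lemma r_hasDerivAt_t (x t : ℝ) : HasDerivAt (fun s => r x s) (rt x t) t := by
  have hDne : (1 + 4*exp (x+5*t) + exp (2*x+8*t)) ≠ 0 := (Dpos x t).ne'
  have hN : HasDerivAt
      (fun s : ℝ => exp (-2*x-4*s) * (1 + 2*exp (x+3*s) + 3*exp (2*x+8*s)))
      ((-4 * exp (-2*x-4*t)) * (1 + 2*exp (x+3*t) + 3*exp (2*x+8*t))
        + exp (-2*x-4*t) * (2 * (3 * exp (x+3*t)) + 3 * (8 * exp (2*x+8*t)))) t :=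
    (hEt x t).mul ((((hAt x t).const_mul 2).const_add 1).add ((hCt x t).const_mul 3))
  have hD : HasDerivAt
      (fun s : ℝ => 1 + 4*exp (x+5*s) + exp (2*x+8*s))
      (4 * (5 * exp (x+5*t)) + 8 * exp (2*x+8*t)) t :=
    (((hBt x t).const_mul 4).const_add 1).add (hCt x t)
  have h := hN.fun_div hD hDne
  have hfun : (fun s => r x s) =
      (fun s : ℝ => exp (-2*x-4*s) * (1 + 2*exp (x+3*s) + 3*exp (2*x+8*s))
        / (1 + 4*exp (x+5*s) + exp (2*x+8*s))) := by
    funext s; simp [r]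
  rw [hfun]
  refine h.congr_deriv ?_
  rw [rt]
  field_simp
  ring

theorem stmt5 (x t : ℝ) :
    deriv (fun s => r x s) t
      = -iteratedDeriv 2 (fun y => r y t) x
        + 2 * q x t * r x t * deriv (fun y => r y t) x := by
  have h1 : deriv (fun s => r x s) t = rt x t := (r_hasDerivAt_t x t).deriv
  have h2 : deriv (fun y => r y t) x = rx x t := (r_hasDerivAt_x x t).deriv
  have hdfun : deriv (fun y => r y t) = fun y => rx y t :=
    funext fun y => (r_hasDerivAt_x y t).deriv
  have h3 : iteratedDeriv 2 (fun y => r y t) x = rxx x t := by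
    rw [iteratedDeriv_succ, iteratedDeriv_one, hdfun]
    exact (rx_hasDerivAt x t).deriv
  rw [h1, h2, h3]
  -- now a pure algebraic identity
  have hx3 : exp (x + 3*t) = exp x * exp t ^ 3 := by
    rw [exp_add]; congr 1; rw [← exp_nat_mul]; norm_num
  have hx5 : exp (x + 5*t) = exp x * exp t ^ 5 := by
    rw [exp_add]; congr 1; rw [← exp_nat_mul]; norm_num
  have hx8 : exp (2*x + 8*t) = exp x ^ 2 * exp t ^ 8 := by
    rw [exp_add]; congr 1
    · rw [← exp_nat_mul]; norm_num
    · rw [← exp_nat_mul]; norm_num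
  have hx9 : exp (3*x + 9*t) = exp x ^ 3 * exp t ^ 9 := by
    rw [exp_add]; congr 1
    · rw [← exp_nat_mul]; norm_num
    · rw [← exp_nat_mul]; norm_num
  have hxm : exp (-2*x - 4*t) = 1 / (exp x ^ 2 * exp t ^ 4) := by
    rw [show -2*x - 4*t = -(2*x + 4*t) by ring, exp_neg, exp_add]
    rw [show exp (2*x) = exp x ^ 2 by rw [← exp_nat_mul]; norm_num,
        show exp (4*t) = exp t ^ 4 by rw [← exp_nat_mul]; norm_num]
    simp [mul_comm]
  have hu : (0:ℝ) < exp x := exp_pos x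
  have hw : (0:ℝ) < exp t := exp_pos t
  rw [rt, rxx, rx, r, q, hx3, hx5, hx8, hx9, hxm]
  set u := exp x
  set w := exp t
  have hq : (0:ℝ) < 1 + 6 * (u * w^5) + 3 * (u^2 * w^8) := by positivity
  have hd : (0:ℝ) < 1 + 4 * (u * w^5) + u^2 * w^8 := by positivity
  field_simp
  ring
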